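/- Let n ≥ 1. There is no 1-bit (ℓ = 1) public-coin SMP protocol with n players, referee rule δ, and nonempty set O of distributions on {0,1,2}, open in the subspace topology of {p ∈ ℝ³ : p_0, p_1, p_2 > 0, p_0 + p_1 + p_2 = 1} (the interior of the probability simplex), such that for every p ∈ O and every x ∈ {0,1,2}, the probability that the referee's output X̂ equals x is exactly p_x. That is, perfect 1-bit simulation of 3-ary distributions is impossible even under the promise that the input distribution comes from an arbitrary open set in the interior of the simplex. -/

import Mathlib

open scoped BigOperators ENNReal

noncomputable def simQ3 (z : ℝ × ℝ) : Fin 3 → ℝ := ![z.1, z.2, 1 - z.1 - z.2]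

lemma simQ3_analytic (i : Fin 3) : AnalyticOnNhd ℝ (fun z => simQ3 z i) Set.univ := by
  fin_cases i <;>
    simp only [simQ3, Matrix.cons_val_zero, Matrix.cons_val_one, Matrix.head_cons,
      Matrix.cons_val_two, Matrix.tail_cons, Fin.isValue]
  · exact analyticOnNhd_fst
  · exact analyticOnNhd_snd
  · exact (analyticOnNhd_const.sub analyticOnNhd_fst).sub analyticOnNhd_snd

lemma simQ3_continuous : Continuous simQ3 := by
  apply continuous_pi
  intro i
  fin_cases i
  · exact continuous_fst
  · exact continuous_snd
  · exact (continuous_const.sub continuous_fst).sub continuous_snd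

lemma simQ3_pt (x : Fin 3) :
    ∃ z : ℝ × ℝ, simQ3 z x = 0 ∧ (∀ y, y ≠ x → simQ3 z y = 1/2) ∧ (∀ y, 0 ≤ simQ3 z y) := by
  fin_cases x
  · refine ⟨((0:ℝ), (1/2:ℝ)), rfl, fun y hy => ?_, fun y => ?_⟩
    · fin_cases y
      · exact absurd rfl hy
      · rfl
      · show (1:ℝ) - 0 - 1/2 = 1/2; norm_num
    · fin_cases y
      · exact le_refl 0
      · show (0:ℝ) ≤ 1/2; norm_num
      · show (0:ℝ) ≤ 1 - 0 - 1/2; norm_num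
  · refine ⟨((1/2:ℝ), (0:ℝ)), rfl, fun y hy => ?_, fun y => ?_⟩
    · fin_cases y
      · rfl
      · exact absurd rfl hy
      · show (1:ℝ) - 1/2 - 0 = 1/2; norm_num
    · fin_cases y
      · show (0:ℝ) ≤ 1/2; norm_num
      · exact le_refl 0
      · show (0:ℝ) ≤ 1 - 1/2 - 0; norm_num
  · refine ⟨((1/2:ℝ), (1/2:ℝ)), ?_, fun y hy => ?_, fun y => ?_⟩
    · show (1:ℝ) - 1/2 - 1/2 = 0; norm_num
    · fin_cases y
      · rfl
      · rfl
      · exact absurd rfl hy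
    · fin_cases y
      · show (0:ℝ) ≤ 1/2; norm_num
      · show (0:ℝ) ≤ 1/2; norm_num
      · show (0:ℝ) ≤ 1 - 1/2 - 1/2; norm_num

/-- The interior of the probability simplex on `{0,1,2}`:
vectors with strictly positive coordinates summing to `1`. -/
def simplexInterior3 : Set (Fin 3 → ℝ) :=
  {p | (∀ i, 0 < p i) ∧ ∑ i, p i = 1}

/-- Probability that the referee of a 1-bit public-coin SMP simulation protocol
(with seed distribution `ν`, message maps `π`, referee rule `δ`) outputs `x`, when the
`n` players hold i.i.d. samples from the distribution `p` on `{0,1,2}`. -/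
noncomputable def simOutReal3 {n : ℕ} {U : Type} (ν : PMF U)
    (π : Fin n → U → Fin 3 → Fin 2)
    (δ : U → (Fin n → Fin 2) → PMF (Option (Fin 3)))
    (p : Fin 3 → ℝ) (x : Fin 3) : ℝ :=
  ∑' u : U, (ν u).toReal * ∑ xs : Fin n → Fin 3,
    (∏ j : Fin n, p (xs j)) * (δ u (fun j => π j u (xs j)) (some x)).toReal

/-- Perfect 1-bit simulation of 3-ary distributions is impossible, even under the promise
that the input distribution comes from an arbitrary nonempty open subset of the interior
of the probability simplex. -/
theorem no_perfect_simulation_three_ary_on_open_set (n : ℕ) (hn : 1 ≤ n)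
    (U : Type) (ν : PMF U)
    (π : Fin n → U → Fin 3 → Fin 2)
    (δ : U → (Fin n → Fin 2) → PMF (Option (Fin 3)))
    (O : Set (Fin 3 → ℝ)) (hO_nonempty : O.Nonempty) (hO_sub : O ⊆ simplexInterior3)
    (hO_open : ∃ V : Set (Fin 3 → ℝ), IsOpen V ∧ O = V ∩ simplexInterior3) :
    ¬ (∀ p ∈ O, ∀ x : Fin 3, simOutReal3 ν π δ p x = p x) := by
  intro hsim
  obtain ⟨V, hV, hOV⟩ := hO_open
  obtain ⟨p₀, hp₀⟩ := hO_nonempty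
  -- basic weights
  set w : U → ℝ := fun u => (ν u).toReal with hw_def
  have hw_nonneg : ∀ u, 0 ≤ w u := fun u => ENNReal.toReal_nonneg
  have hw_sum : Summable w := by
    apply ENNReal.summable_toReal
    rw [ν.tsum_coe]; exact ENNReal.one_ne_top
  have hw_tsum : ∑' u, w u = 1 := by
    rw [← ENNReal.tsum_toReal_eq (fun u => ν.apply_ne_top u)]
    rw [ν.tsum_coe]; rfl
  -- referee output kernel (real valued)
  set D : U → (Fin n → Fin 2) → Fin 3 → ℝ :=
    fun u m x => (δ u m (some x)).toReal with hD_def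
  have hD_nonneg : ∀ u m x, 0 ≤ D u m x := fun _ _ _ => ENNReal.toReal_nonneg
  have hD_le_one : ∀ u m x, D u m x ≤ 1 := by
    intro u m x
    have h1 : δ u m (some x) ≤ 1 := (δ u m).coe_le_one (some x)
    have := ENNReal.toReal_mono ENNReal.one_ne_top h1
    simpa using this
  set msg : U → (Fin n → Fin 3) → (Fin n → Fin 2) :=
    fun u xs j => π j u (xs j) with hmsg_def
  -- coefficients
  set c : (Fin n → Fin 3) → Fin 3 → ℝ :=
    fun xs x => ∑' u, w u * D u (msg u xs) x with hc_def
  have hc_smbl : ∀ xs x, Summable (fun u => w u * D u (msg u xs) x) := by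
    intro xs x
    refine Summable.of_nonneg_of_le (fun u => mul_nonneg (hw_nonneg u) (hD_nonneg _ _ _))
      (fun u => mul_le_of_le_one_right (hw_nonneg u) (hD_le_one _ _ _)) hw_sum
  have hc_nonneg : ∀ xs x, 0 ≤ c xs x := fun xs x =>
    tsum_nonneg (fun u => mul_nonneg (hw_nonneg u) (hD_nonneg _ _ _))
  -- rewrite simOutReal3 as a polynomial with coefficients c
  have hF : ∀ (p : Fin 3 → ℝ) (x : Fin 3),
      simOutReal3 ν π δ p x = ∑ xs : Fin n → Fin 3, (∏ j, p (xs j)) * c xs x := by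
    intro p x
    unfold simOutReal3
    calc ∑' u : U, (ν u).toReal * ∑ xs : Fin n → Fin 3,
          (∏ j : Fin n, p (xs j)) * (δ u (fun j => π j u (xs j)) (some x)).toReal
        = ∑' u : U, ∑ xs : Fin n → Fin 3,
          (∏ j : Fin n, p (xs j)) * (w u * D u (msg u xs) x) := by
          apply tsum_congr
          intro u
          rw [Finset.mul_sum]
          exact Finset.sum_congr rfl fun xs _ => by ring
      _ = ∑ xs : Fin n → Fin 3, ∑' u : U,
          (∏ j : Fin n, p (xs j)) * (w u * D u (msg u xs) x) := by
          exact Summable.tsum_finsetSum fun xs _ => (hc_smbl xs x).mul_left _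
      _ = ∑ xs : Fin n → Fin 3, (∏ j, p (xs j)) * c xs x := by
          exact Finset.sum_congr rfl fun xs _ => tsum_mul_left
  -- global polynomial identity via analytic continuation
  have hpos : ∀ i, 0 < p₀ i := (hO_sub hp₀).1
  have hsum3 : p₀ 0 + p₀ 1 + p₀ 2 = 1 := by
    have := (hO_sub hp₀).2; rwa [Fin.sum_univ_three] at this
  set z₀ : ℝ × ℝ := (p₀ 0, p₀ 1) with hz₀_def
  have hqz₀ : simQ3 z₀ = p₀ := by
    funext i; fin_cases i
    · rfl
    · rfl
    · show 1 - p₀ 0 - p₀ 1 = p₀ 2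
      linarith
  set W : Set (ℝ × ℝ) :=
    simQ3 ⁻¹' V ∩ ({z | 0 < z.1} ∩ {z | 0 < z.2} ∩ {z | z.1 + z.2 < 1}) with hW_def
  have hWopen : IsOpen W := by
    refine IsOpen.inter (hV.preimage simQ3_continuous) ?_
    refine IsOpen.inter (IsOpen.inter ?_ ?_) ?_
    · exact isOpen_lt continuous_const continuous_fst
    · exact isOpen_lt continuous_const continuous_snd
    · exact isOpen_lt (continuous_fst.add continuous_snd) continuous_const
  have hWO : ∀ z ∈ W, simQ3 z ∈ O := by
    rintro z ⟨hzV, ⟨hz1, hz2⟩, hz3⟩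
    rw [hOV]
    refine ⟨hzV, ?_, ?_⟩
    · intro i; fin_cases i
      · exact hz1
      · exact hz2
      · show (0:ℝ) < 1 - z.1 - z.2
        simp only [Set.mem_setOf_eq] at hz3
        linarith
    · rw [Fin.sum_univ_three]
      show z.1 + z.2 + (1 - z.1 - z.2) = 1
      ring
  have hz₀W : z₀ ∈ W := by
    refine ⟨?_, ⟨?_, ?_⟩, ?_⟩
    · show simQ3 z₀ ∈ V
      rw [hqz₀]
      have := hp₀; rw [hOV] at this; exact this.1
    · exact hpos 0
    · exact hpos 1
    · show p₀ 0 + p₀ 1 < 1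
      have := hpos 2; linarith
  have hglob : ∀ (x : Fin 3) (z : ℝ × ℝ),
      (∑ xs : Fin n → Fin 3, (∏ j, simQ3 z (xs j)) * c xs x) = simQ3 z x := by
    intro x
    have hLa : AnalyticOnNhd ℝ
        (fun z => ∑ xs : Fin n → Fin 3, (∏ j, simQ3 z (xs j)) * c xs x) Set.univ := by
      have h := Finset.analyticOnNhd_sum Finset.univ fun xs _ =>
        ((Finset.analyticOnNhd_prod Finset.univ fun j _ => simQ3_analytic (xs j)).mul
          (analyticOnNhd_const (v := c xs x)))
      have e : (fun z => ∑ xs : Fin n → Fin 3, (∏ j, simQ3 z (xs j)) * c xs x)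
          = ∑ xs ∈ Finset.univ, fun z =>
            (∏ j ∈ Finset.univ, fun z => simQ3 z (xs j)) z * c xs x := by
        funext z
        simp [Finset.sum_apply, Finset.prod_apply]
      rw [e]
      exact h
    have hev : (fun z => ∑ xs : Fin n → Fin 3, (∏ j, simQ3 z (xs j)) * c xs x)
        =ᶠ[nhds z₀] (fun z => simQ3 z x) := by
      filter_upwards [hWopen.mem_nhds hz₀W] with z hz
      rw [← hF (simQ3 z) x]
      exact hsim _ (hWO z hz) x
    have := AnalyticOnNhd.eq_of_eventuallyEq hLa (simQ3_analytic x) hev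
    exact fun z => congrFun this z
  -- Fact 1: coefficients vanish when xs avoids x
  have hvan : ∀ (x : Fin 3) (xs : Fin n → Fin 3), (∀ j, xs j ≠ x) → c xs x = 0 := by
    intro x xs hxs
    obtain ⟨z, hz0, hzh, hznn⟩ := simQ3_pt x
    have hid := hglob x z
    rw [hz0] at hid
    have hterms : ∀ ys ∈ Finset.univ, (0:ℝ) ≤ (∏ j, simQ3 z (ys j)) * c ys x :=
      fun ys _ => mul_nonneg (Finset.prod_nonneg fun j _ => hznn _) (hc_nonneg ys x)
    have h0 : (∏ j, simQ3 z (xs j)) * c xs x = 0 :=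
      (Finset.sum_eq_zero_iff_of_nonneg hterms).mp hid xs (Finset.mem_univ xs)
    have hprod : (∏ j, simQ3 z (xs j)) = (1/2:ℝ)^n := by
      rw [Finset.prod_congr rfl fun j _ => hzh (xs j) (hxs j)]
      simp
    rw [hprod] at h0
    have hne2 : ((1:ℝ)/2)^n ≠ 0 := by positivity
    exact (mul_eq_zero.mp h0).resolve_left hne2
  -- the total referee output mass
  have hr_le : ∀ u m, ∑ x : Fin 3, D u m x ≤ 1 := by
    intro u m
    have h1 : ∑ x : Fin 3, δ u m (some x) ≤ 1 := by
      rw [← (δ u m).tsum_coe]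
      have heq : ∑ x : Fin 3, δ u m (some x)
          = ∑ o ∈ Finset.univ.map ⟨some, Option.some_injective _⟩, δ u m o := by
        rw [Finset.sum_map]
        rfl
      rw [heq]
      exact ENNReal.sum_le_tsum _
    have h2 : (∑ x : Fin 3, δ u m (some x)).toReal = ∑ x : Fin 3, D u m x :=
      ENNReal.toReal_sum fun x _ => PMF.apply_ne_top _ _
    calc ∑ x : Fin 3, D u m x = (∑ x : Fin 3, δ u m (some x)).toReal := h2.symm
      _ ≤ (1:ℝ≥0∞).toReal := ENNReal.toReal_mono ENNReal.one_ne_top h1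
      _ = 1 := rfl
  have hr_nonneg : ∀ u m, (0:ℝ) ≤ ∑ x : Fin 3, D u m x :=
    fun u m => Finset.sum_nonneg fun x _ => hD_nonneg u m x
  have hwr_smbl : ∀ xs, Summable (fun u => w u * ∑ x : Fin 3, D u (msg u xs) x) := by
    intro xs
    refine Summable.of_nonneg_of_le (fun u => mul_nonneg (hw_nonneg u) (hr_nonneg _ _))
      (fun u => mul_le_of_le_one_right (hw_nonneg u) (hr_le _ _)) hw_sum
  have hcsum : ∀ xs, ∑ x : Fin 3, c xs x = ∑' u, w u * ∑ x : Fin 3, D u (msg u xs) x := by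
    intro xs
    rw [← Summable.tsum_finsetSum (fun x _ => hc_smbl xs x)]
    exact tsum_congr fun u => by rw [Finset.mul_sum]
  have hcsum_le : ∀ xs, ∑ x : Fin 3, c xs x ≤ 1 := by
    intro xs
    rw [hcsum xs]
    calc ∑' u, w u * ∑ x : Fin 3, D u (msg u xs) x
        ≤ ∑' u, w u := Summable.tsum_le_tsum
          (fun u => mul_le_of_le_one_right (hw_nonneg u) (hr_le _ _)) (hwr_smbl xs) hw_sum
      _ = 1 := hw_tsum
  -- Fact 2: each ∑_x c xs x = 1
  have hsum1 : ∀ xs, ∑ x : Fin 3, c xs x = 1 := by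
    have hzu : ∀ y : Fin 3, simQ3 ((3:ℝ)⁻¹, (3:ℝ)⁻¹) y = (3:ℝ)⁻¹ := by
      intro y; fin_cases y
      · rfl
      · rfl
      · show (1:ℝ) - 3⁻¹ - 3⁻¹ = 3⁻¹; norm_num
    have hx : ∀ x : Fin 3, ∑ xs : Fin n → Fin 3, ((3:ℝ)⁻¹)^n * c xs x = (3:ℝ)⁻¹ := by
      intro x
      have hprod : ∀ xs : Fin n → Fin 3,
          ∏ j : Fin n, simQ3 ((3:ℝ)⁻¹, (3:ℝ)⁻¹) (xs j) = ((3:ℝ)⁻¹)^n := by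
        intro xs
        rw [Finset.prod_congr rfl fun j _ => hzu (xs j)]
        simp
      calc ∑ xs : Fin n → Fin 3, ((3:ℝ)⁻¹)^n * c xs x
          = ∑ xs : Fin n → Fin 3, (∏ j : Fin n, simQ3 ((3:ℝ)⁻¹, (3:ℝ)⁻¹) (xs j)) * c xs x :=
            Finset.sum_congr rfl fun xs _ => by rw [hprod xs]
        _ = simQ3 ((3:ℝ)⁻¹, (3:ℝ)⁻¹) x := hglob x _
        _ = (3:ℝ)⁻¹ := hzu x
    have htot : ∑ xs : Fin n → Fin 3, ((3:ℝ)⁻¹)^n * (∑ x : Fin 3, c xs x) = 1 := by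
      calc ∑ xs : Fin n → Fin 3, ((3:ℝ)⁻¹)^n * (∑ x : Fin 3, c xs x)
          = ∑ xs : Fin n → Fin 3, ∑ x : Fin 3, ((3:ℝ)⁻¹)^n * c xs x := by
            exact Finset.sum_congr rfl fun xs _ => Finset.mul_sum _ _ _
        _ = ∑ x : Fin 3, ∑ xs : Fin n → Fin 3, ((3:ℝ)⁻¹)^n * c xs x := Finset.sum_comm
        _ = ∑ _x : Fin 3, (3:ℝ)⁻¹ := Finset.sum_congr rfl fun x _ => hx x
        _ = 1 := by norm_num
    intro xs
    by_contra hne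
    have hlt : ∑ x : Fin 3, c xs x < 1 := lt_of_le_of_ne (hcsum_le xs) hne
    have hstrict : ∑ ys : Fin n → Fin 3, ((3:ℝ)⁻¹)^n * (∑ x : Fin 3, c ys x)
        < ∑ ys : Fin n → Fin 3, ((3:ℝ)⁻¹)^n * 1 := by
      refine Finset.sum_lt_sum (fun ys _ => ?_) ⟨xs, Finset.mem_univ xs, ?_⟩
      · exact mul_le_mul_of_nonneg_left (hcsum_le ys) (by positivity)
      · exact mul_lt_mul_of_pos_left hlt (by positivity)
    rw [htot] at hstrict
    have hcard : ∑ ys : Fin n → Fin 3, ((3:ℝ)⁻¹)^n * 1 = 1 := by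
      rw [Finset.sum_const, Finset.card_univ]
      simp only [Fintype.card_fun, Fintype.card_fin, mul_one, nsmul_eq_mul]
      push_cast
      rw [← mul_pow]
      norm_num
    rw [hcard] at hstrict
    exact absurd hstrict (lt_irrefl 1)
  -- per-seed consequences
  have hvan_u : ∀ u, ν u ≠ 0 → ∀ (x : Fin 3) (xs : Fin n → Fin 3), (∀ j, xs j ≠ x) →
      D u (msg u xs) x = 0 := by
    intro u hu x xs hxs
    have h0 : c xs x = 0 := hvan x xs hxs
    have hle : w u * D u (msg u xs) x ≤ 0 := by
      rw [← h0]
      exact Summable.le_tsum (hc_smbl xs x) u fun v _ => mul_nonneg (hw_nonneg v) (hD_nonneg _ _ _)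
    have hwpos : 0 < w u := ENNReal.toReal_pos hu (ν.apply_ne_top u)
    nlinarith [hD_nonneg u (msg u xs) x]
  have hfull_u : ∀ u, ν u ≠ 0 → ∀ xs, ∑ x : Fin 3, D u (msg u xs) x = 1 := by
    intro u hu xs
    have h1 : ∑' v, w v * ∑ x : Fin 3, D v (msg v xs) x = 1 := by
      rw [← hcsum xs, hsum1 xs]
    have hz : ∑' v, (w v - w v * ∑ x : Fin 3, D v (msg v xs) x) = 0 := by
      rw [Summable.tsum_sub hw_sum (hwr_smbl xs), hw_tsum, h1, sub_self]
    have hle : w u - w u * ∑ x : Fin 3, D u (msg u xs) x ≤ 0 := by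
      rw [← hz]
      exact Summable.le_tsum (hw_sum.sub (hwr_smbl xs)) u fun v _ =>
        sub_nonneg.mpr (mul_le_of_le_one_right (hw_nonneg v) (hr_le _ _))
    have hwpos : 0 < w u := ENNReal.toReal_pos hu (ν.apply_ne_top u)
    have hge : (1:ℝ) ≤ ∑ x : Fin 3, D u (msg u xs) x := by nlinarith
    exact le_antisymm (hr_le u (msg u xs)) hge
  -- final contradiction via collisions at a seed in the support
  obtain ⟨u₀, hu₀'⟩ := ν.support_nonempty
  have hu₀ : ν u₀ ≠ 0 := by rwa [PMF.mem_support_iff] at hu₀'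
  have hcoll : ∀ j : Fin n, ∃ ab : Fin 3 × Fin 3, ab.1 ≠ ab.2 ∧ π j u₀ ab.1 = π j u₀ ab.2 := by
    intro j
    obtain ⟨a, b, hab, heq⟩ := Fintype.exists_ne_map_eq_of_card_lt (π j u₀) (by simp)
    exact ⟨(a, b), hab, heq⟩
  choose ab hne heq using hcoll
  have hD0 : ∀ x : Fin 3, D u₀ (msg u₀ (fun j => (ab j).1)) x = 0 := by
    intro x
    have havoid : ∀ j, (if (ab j).1 = x then (ab j).2 else (ab j).1) ≠ x := by
      intro j
      split_ifs with h
      · intro hbx; exact hne j (h.trans hbx.symm)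
      · exact h
    have hmsgeq : msg u₀ (fun j => if (ab j).1 = x then (ab j).2 else (ab j).1)
        = msg u₀ (fun j => (ab j).1) := by
      funext j
      show π j u₀ (if (ab j).1 = x then (ab j).2 else (ab j).1) = π j u₀ ((ab j).1)
      split_ifs with h
      · exact (heq j).symm
      · rfl
    have := hvan_u u₀ hu₀ x (fun j => if (ab j).1 = x then (ab j).2 else (ab j).1) havoid
    rwa [hmsgeq] at this
  have hone := hfull_u u₀ hu₀ (fun j => (ab j).1)
  rw [Finset.sum_congr rfl fun x _ => hD0 x] at hone
  simp at hone
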